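/- arXiv:2105.07097 — 4 statements merged into one kernel-verified Lean document; each statement's English description precedes it below -/
import Mathlib

section
/- Given any n×m row-stochastic posterior matrix B with no zero column and any strictly positive prior p in its 'Bayes-plausible' relation (i.e., Σ_s α_s B(s,·) = p for some probability weights α_s > 0), the matrix defined by I(θ,s) := B(s,θ)·α_s / p(θ) is a valid information structure (row-stochastic m×n), and Bayesian updating from prior p via I reproduces B. -/
open Matrix

theorem stmt8 (n m : ℕ) (B : Matrix (Fin n) (Fin m) ℝ)
    (hBnn : ∀ s θ, 0 ≤ B s θ) (hBrow : ∀ s, ∑ θ, B s θ = 1)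
    (α : Fin n → ℝ) (hα : ∀ s, 0 < α s) (hαsum : ∑ s, α s = 1)
    (p : Fin m → ℝ) (hpdef : ∀ θ, p θ = ∑ s, α s * B s θ) (hp : ∀ θ, 0 < p θ)
    (I : Matrix (Fin m) (Fin n) ℝ)
    (hI : ∀ θ s, I θ s = B s θ * α s / p θ) :
    (∀ θ s, 0 ≤ I θ s) ∧ (∀ θ, ∑ s, I θ s = 1) ∧
    (∀ s, ∑ θ, p θ * I θ s = α s) ∧
    (∀ s θ, p θ * I θ s / ∑ θ', p θ' * I θ' s = B s θ) := by
  have key : ∀ θ s, p θ * I θ s = B s θ * α s := by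
    intro θ s
    rw [hI]
    rw [mul_div_assoc', mul_comm, mul_div_assoc, div_self (hp θ).ne', mul_one]
  have hsum : ∀ s, ∑ θ, p θ * I θ s = α s := by
    intro s
    simp only [key]
    rw [← Finset.sum_mul, hBrow, one_mul]
  refine ⟨?_, ?_, hsum, ?_⟩
  · intro θ s
    rw [hI]
    exact div_nonneg (mul_nonneg (hBnn s θ) (hα s).le) (hp θ).le
  · intro θ
    have h := hp θ
    have : ∑ s, I θ s = (∑ s, B s θ * α s) / p θ := by
      rw [Finset.sum_div]
      exact Finset.sum_congr rfl fun s _ => hI θ s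
    rw [this, hpdef θ]
    rw [div_eq_one_iff_eq (by rw [← hpdef θ]; exact h.ne')]
    exact Finset.sum_congr rfl fun s _ => mul_comm _ _
  · intro s θ
    rw [hsum s, key, mul_div_assoc, div_self (hα s).ne', mul_one]
end

section
/- If an n×n row-stochastic matrix Q with strictly positive entries has eigenvalue 1, then the left eigenspace for eigenvalue 1 is one-dimensional and contains a unique vector with strictly positive entries summing to 1 (the stationary distribution). -/
open Matrix

private lemma fix_apply {n : ℕ} (Q : Matrix (Fin n) (Fin n) ℝ)
    (w : Fin n → ℝ) (hw : Q.vecMul w = w) (i : Fin n) :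
    ∑ j, w j * Q j i = w i := by
  have := congr_fun hw i
  simpa [Matrix.vecMul, dotProduct] using this

private lemma fix_sign {n : ℕ} (Q : Matrix (Fin n) (Fin n) ℝ)
    (hQpos : ∀ i j, 0 < Q i j) (hQrow : ∀ i, ∑ j, Q i j = 1)
    (w : Fin n → ℝ) (hw : Q.vecMul w = w) :
    (∀ i, 0 ≤ w i) ∨ (∀ i, w i ≤ 0) := by
  by_contra h
  push_neg at h
  obtain ⟨⟨a, ha⟩, ⟨b, hb⟩⟩ := h
  have key : ∀ i, |w i| < ∑ j, |w j| * Q j i := by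
    intro i
    have hS : ∑ j, w j * Q j i = w i := fix_apply Q w hw i
    have h1 : ∑ j, w j * Q j i < ∑ j, |w j| * Q j i := by
      apply Finset.sum_lt_sum
      · intro j _
        exact mul_le_mul_of_nonneg_right (le_abs_self _) (hQpos j i).le
      · refine ⟨a, Finset.mem_univ a, mul_lt_mul_of_pos_right ?_ (hQpos a i)⟩
        rw [abs_of_neg ha]; linarith
    have h2 : ∑ j, (- w j) * Q j i < ∑ j, |w j| * Q j i := by
      apply Finset.sum_lt_sum
      · intro j _
        exact mul_le_mul_of_nonneg_right (neg_le_abs _) (hQpos j i).le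
      · refine ⟨b, Finset.mem_univ b, mul_lt_mul_of_pos_right ?_ (hQpos b i)⟩
        have : 0 < |w b| := abs_pos.mpr (ne_of_gt hb)
        linarith
    rw [hS] at h1
    have h2' : - w i < ∑ j, |w j| * Q j i := by
      have : ∑ j, (- w j) * Q j i = - ∑ j, w j * Q j i := by
        simp [neg_mul, Finset.sum_neg_distrib]
      rw [this, hS] at h2
      exact h2
    exact abs_lt.mpr ⟨by linarith, h1⟩
  have hsum : ∑ i, |w i| < ∑ i, |w i| := by
    calc ∑ i, |w i| < ∑ i, ∑ j, |w j| * Q j i := Finset.sum_lt_sum_of_nonempty ⟨a, Finset.mem_univ a⟩ (fun i _ => key i)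
    _ = ∑ j, |w j| * ∑ i, Q j i := by
        rw [Finset.sum_comm]
        simp [Finset.mul_sum]
    _ = ∑ j, |w j| := by simp [hQrow]
  exact lt_irrefl _ hsum

private lemma fix_pos {n : ℕ} (Q : Matrix (Fin n) (Fin n) ℝ)
    (hQpos : ∀ i j, 0 < Q i j)
    (w : Fin n → ℝ) (hw : Q.vecMul w = w) (hnn : ∀ i, 0 ≤ w i)
    (hne : ∃ k, 0 < w k) : ∀ i, 0 < w i := by
  intro i
  obtain ⟨k, hk⟩ := hne
  rw [← fix_apply Q w hw i]
  apply Finset.sum_pos'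
  · intro j _
    exact mul_nonneg (hnn j) (hQpos j i).le
  · exact ⟨k, Finset.mem_univ k, mul_pos hk (hQpos k i)⟩

private lemma fix_sum_zero {n : ℕ} (Q : Matrix (Fin n) (Fin n) ℝ)
    (hQpos : ∀ i j, 0 < Q i j) (hQrow : ∀ i, ∑ j, Q i j = 1)
    (w : Fin n → ℝ) (hw : Q.vecMul w = w) (hs : ∑ i, w i = 0) : w = 0 := by
  rcases fix_sign Q hQpos hQrow w hw with h | h
  · funext i
    exact (Finset.sum_eq_zero_iff_of_nonneg (fun j _ => h j)).mp hs i (Finset.mem_univ i)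
  · funext i
    have : ∑ i, (- w i) = 0 := by simp [hs]
    have := (Finset.sum_eq_zero_iff_of_nonneg (fun j _ => neg_nonneg.mpr (h j))).mp this i (Finset.mem_univ i)
    show w i = 0
    linarith

theorem stmt11 (n : ℕ) (hn : 0 < n) (Q : Matrix (Fin n) (Fin n) ℝ)
    (hQpos : ∀ i j, 0 < Q i j) (hQrow : ∀ i, ∑ j, Q i j = 1) :
    ∃! v : Fin n → ℝ, (∀ i, 0 < v i) ∧ (∑ i, v i = 1) ∧ Q.vecMul v = v ∧
      (∀ w : Fin n → ℝ, Q.vecMul w = w → ∃ c : ℝ, w = c • v) := by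
  -- existence of a nonzero fixed vector
  have hdet : (Q - 1).det = 0 := by
    rw [← Matrix.exists_mulVec_eq_zero_iff]
    refine ⟨fun _ => 1, ?_, ?_⟩
    · intro h
      have := congr_fun h ⟨0, hn⟩
      norm_num at this
    · funext i
      rw [Matrix.sub_mulVec, Matrix.one_mulVec]
      simp [Matrix.mulVec, dotProduct, hQrow i]
  have hdetT : (Qᵀ - 1).det = 0 := by
    have : (Qᵀ - 1) = (Q - 1)ᵀ := by rw [Matrix.transpose_sub, Matrix.transpose_one]
    rw [this, Matrix.det_transpose]
    exact hdet
  obtain ⟨w0, hw0ne, hw0⟩ := (Matrix.exists_mulVec_eq_zero_iff).mpr hdetT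
  have hw0fix : Q.vecMul w0 = w0 := by
    have : Qᵀ.mulVec w0 = w0 := by
      have := hw0
      rw [Matrix.sub_mulVec, Matrix.one_mulVec] at this
      have := sub_eq_zero.mp this
      exact this
    rw [← Matrix.mulVec_transpose]
    exact this
  -- make it nonnegative
  obtain ⟨u, hufix, hunn, hune⟩ : ∃ u : Fin n → ℝ, Q.vecMul u = u ∧ (∀ i, 0 ≤ u i) ∧ ∃ k, 0 < u k := by
    rcases fix_sign Q hQpos hQrow w0 hw0fix with h | h
    · refine ⟨w0, hw0fix, h, ?_⟩
      by_contra hc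
      push_neg at hc
      exact hw0ne (funext fun i => le_antisymm (hc i) (h i))
    · refine ⟨-w0, ?_, fun i => by simpa using neg_nonneg.mpr (h i), ?_⟩
      · rw [Matrix.neg_vecMul, hw0fix]
      · by_contra hc
        push_neg at hc
        exact hw0ne (funext fun i => le_antisymm (h i) (by simpa using hc i))
  have hupos := fix_pos Q hQpos u hufix hunn hune
  set s : ℝ := ∑ i, u i with hs
  have hspos : 0 < s := Finset.sum_pos (fun i _ => hupos i) ⟨⟨0, hn⟩, Finset.mem_univ _⟩
  set v : Fin n → ℝ := s⁻¹ • u with hv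
  have hvfix : Q.vecMul v = v := by
    rw [hv, Matrix.smul_vecMul, hufix]
  have hvpos : ∀ i, 0 < v i := fun i => mul_pos (inv_pos.mpr hspos) (hupos i)
  have hvsum : ∑ i, v i = 1 := by
    rw [hv]
    simp only [Pi.smul_apply, smul_eq_mul]
    rw [← Finset.mul_sum, ← hs]
    exact inv_mul_cancel₀ (ne_of_gt hspos)
  have hspan : ∀ w : Fin n → ℝ, Q.vecMul w = w → ∃ c : ℝ, w = c • v := by
    intro w hwfix
    refine ⟨∑ i, w i, ?_⟩
    have hz : Q.vecMul (w - (∑ i, w i) • v) = w - (∑ i, w i) • v := by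
      rw [Matrix.sub_vecMul, Matrix.smul_vecMul, hwfix, hvfix]
    have hzs : ∑ i, (w - (∑ i, w i) • v) i = 0 := by
      simp only [Pi.sub_apply, Pi.smul_apply, smul_eq_mul]
      rw [Finset.sum_sub_distrib, ← Finset.mul_sum, hvsum]
      ring
    have := fix_sum_zero Q hQpos hQrow _ hz hzs
    have := sub_eq_zero.mp this
    exact this
  refine ⟨v, ⟨hvpos, hvsum, hvfix, hspan⟩, ?_⟩
  intro y ⟨hypos, hysum, hyfix, _⟩
  obtain ⟨c, hc⟩ := hspan y hyfix
  have : c = 1 := by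
    have := hysum
    rw [hc] at this
    simp only [Pi.smul_apply, smul_eq_mul] at this
    rw [← Finset.mul_sum, hvsum, mul_one] at this
    exact this
  rw [hc, this, one_smul]
end

section
/- Ridge regression limit solves the normal equation: let B be an n×m real matrix and Q an n×n matrix such that the equation B·X = Q has a solution X₀ (m×n). Then the limit X̃ := lim_{λ→0⁺} (BᵀB + λ·Id)⁻¹ Bᵀ Q exists and satisfies B·X̃ = Q; moreover X̃ is the minimum-Frobenius-norm solution of B·X = Q. -/
open Matrix Filter

lemma conj_mul_aux {m : ℕ} (U : Matrix (Fin m) (Fin m) ℝ) (h : star U * U = 1)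
    (d e : Fin m → ℝ) :
    (U * diagonal d * star U) * (U * diagonal e * star U)
      = U * diagonal (fun k => d k * e k) * star U := by
  have h2 : diagonal d * (star U * U) * diagonal e = diagonal fun k => d k * e k := by
    rw [h, mul_one, diagonal_mul_diagonal]
  calc (U * diagonal d * star U) * (U * diagonal e * star U)
      = U * (diagonal d * (star U * U) * diagonal e) * star U := by
        simp only [Matrix.mul_assoc]
    _ = U * diagonal (fun k => d k * e k) * star U := by rw [h2]

lemma minnorm_aux {m n : ℕ} (P : Matrix (Fin m) (Fin m) ℝ) (X : Matrix (Fin m) (Fin n) ℝ)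
    (hPT : Pᵀ = P) (hPP : P * P = P) :
    ∑ i, ∑ j, ((P * X) i j) ^ 2 ≤ ∑ i, ∑ j, (X i j) ^ 2 := by
  set Z := X - P * X with hZdef
  have h0 : (P * X)ᵀ * Z = 0 := by
    rw [hZdef, transpose_mul, hPT, Matrix.mul_sub, ← Matrix.mul_assoc,
      Matrix.mul_assoc Xᵀ P P, hPP, sub_self]
  have hcross : ∑ i, ∑ j, (P * X) i j * Z i j = 0 := by
    calc ∑ i, ∑ j, (P * X) i j * Z i j
        = ∑ j, ∑ i, (P * X) i j * Z i j := Finset.sum_comm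
      _ = ∑ j, ((P * X)ᵀ * Z) j j := Finset.sum_congr rfl fun j _ => by
            simp [Matrix.mul_apply, Matrix.transpose_apply, mul_comm]
      _ = 0 := by rw [h0]; simp
  have hdecomp : ∀ i j, X i j = (P * X) i j + Z i j := fun i j => by simp [hZdef]
  calc ∑ i, ∑ j, ((P * X) i j) ^ 2
      ≤ ∑ i, ∑ j, ((P * X) i j) ^ 2
          + (2 * ∑ i, ∑ j, (P * X) i j * Z i j + ∑ i, ∑ j, (Z i j) ^ 2) := by
        rw [hcross]
        have : (0:ℝ) ≤ ∑ i, ∑ j, (Z i j) ^ 2 :=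
          Finset.sum_nonneg fun i _ => Finset.sum_nonneg fun j _ => sq_nonneg _
        linarith
    _ = ∑ i, ∑ j, (X i j) ^ 2 := by
        simp only [Finset.mul_sum, ← Finset.sum_add_distrib]
        congr 1; funext i; congr 1; funext j
        rw [hdecomp i j]; ring

theorem stmt13 (n m : ℕ) (B : Matrix (Fin n) (Fin m) ℝ)
    (Q : Matrix (Fin n) (Fin n) ℝ)
    (hsol : ∃ X₀ : Matrix (Fin m) (Fin n) ℝ, B * X₀ = Q) :
    ∃ Xt : Matrix (Fin m) (Fin n) ℝ,
      Tendsto (fun t : ℝ => (Bᵀ * B + t • (1 : Matrix (Fin m) (Fin m) ℝ))⁻¹ * Bᵀ * Q)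
        (nhdsWithin 0 (Set.Ioi 0)) (nhds Xt) ∧
      B * Xt = Q ∧
      (∀ X : Matrix (Fin m) (Fin n) ℝ, B * X = Q →
        ∑ i, ∑ j, (Xt i j) ^ 2 ≤ ∑ i, ∑ j, (X i j) ^ 2) := by
  obtain ⟨X₀, hX₀⟩ := hsol
  have hBt : Bᴴ = Bᵀ := conjTranspose_eq_transpose_of_trivial B
  set A : Matrix (Fin m) (Fin m) ℝ := Bᵀ * B with hAdef
  have hA : A.IsHermitian := by
    rw [hAdef, ← hBt]; exact isHermitian_conjTranspose_mul_self B
  set U : Matrix (Fin m) (Fin m) ℝ := (hA.eigenvectorUnitary : Matrix (Fin m) (Fin m) ℝ) with hUdef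
  set μ : Fin m → ℝ := hA.eigenvalues with hμdef
  have hμ0 : ∀ k, 0 ≤ μ k := by
    intro k
    have := (Matrix.PosSemidef.eigenvalues_nonneg (A := A) ?_ k)
    · exact this
    · rw [hAdef, ← hBt]; exact posSemidef_conjTranspose_mul_self B
  have hU1 : star U * U = 1 := mem_unitaryGroup_iff'.mp (hA.eigenvectorUnitary).2
  have hU2 : U * star U = 1 := mem_unitaryGroup_iff.mp (hA.eigenvectorUnitary).2
  have hspec : A = U * diagonal μ * star U := by
    have := hA.spectral_theorem
    rwa [show (RCLike.ofReal ∘ hA.eigenvalues : Fin m → ℝ) = μ by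
      funext k; simp [hμdef]] at this
  set χ : Fin m → ℝ := fun k => if μ k = 0 then 0 else 1 with hχdef
  set P : Matrix (Fin m) (Fin m) ℝ := U * diagonal χ * star U with hPdef
  set Xt : Matrix (Fin m) (Fin n) ℝ := P * X₀ with hXtdef
  -- key conjugation multiplication
  have key := conj_mul_aux U hU1
  -- A * P = A
  have hAP : A * P = A := by
    have hfun : (fun k => μ k * χ k) = μ := by
      funext k; by_cases h : μ k = 0 <;> simp [hχdef, h]
    rw [hspec, hPdef, key, hfun]
  -- P * M = 0 whenever A * M = 0
  have hPkill : ∀ M : Matrix (Fin m) (Fin n) ℝ, A * M = 0 → P * M = 0 := by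
    intro M hM
    have h1 : diagonal μ * (star U * M) = 0 := by
      have : star U * (A * M) = 0 := by rw [hM, Matrix.mul_zero]
      rw [hspec] at this
      calc diagonal μ * (star U * M)
          = (star U * U) * diagonal μ * (star U * M) := by rw [hU1, one_mul]
        _ = star U * (U * diagonal μ * star U * M) := by simp only [Matrix.mul_assoc]
        _ = 0 := this
    have h2 : diagonal χ * (star U * M) = 0 := by
      ext k j
      have := congrFun (congrFun h1 k) j
      simp only [Matrix.diagonal_mul, Matrix.zero_apply] at this ⊢
      by_cases h : μ k = 0
      · simp [hχdef, h]
      · simp only [hχdef, h, if_neg, if_false, one_mul]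
        exact (mul_eq_zero.mp this).resolve_left h
    calc P * M = U * (diagonal χ * (star U * M)) := by
          rw [hPdef]; simp only [Matrix.mul_assoc]
      _ = 0 := by rw [h2, Matrix.mul_zero]
  -- B * M = 0 whenever A * M = 0
  have hBkill : ∀ M : Matrix (Fin m) (Fin n) ℝ, A * M = 0 → B * M = 0 := by
    intro M hM
    have : (B * M)ᴴ * (B * M) = 0 := by
      calc (B * M)ᴴ * (B * M) = Mᴴ * (Bᴴ * B * M) := by
            rw [conjTranspose_mul]; simp only [Matrix.mul_assoc]
        _ = Mᴴ * (A * M) := by rw [hBt]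
        _ = 0 := by rw [hM, Matrix.mul_zero]
    exact conjTranspose_mul_self_eq_zero.mp this
  -- B * Xt = Q
  have hBXt : B * Xt = Q := by
    have hM : A * (X₀ - Xt) = 0 := by
      rw [Matrix.mul_sub, hXtdef, ← Matrix.mul_assoc, hAP, sub_self]
    have h := hBkill _ hM
    rw [Matrix.mul_sub, sub_eq_zero] at h
    rw [← h, hX₀]
  -- P projects every solution's X to Xt
  have hPX : ∀ X : Matrix (Fin m) (Fin n) ℝ, B * X = Q → P * X = Xt := by
    intro X hX
    have hM : A * (X - X₀) = 0 := by
      rw [Matrix.mul_sub, hAdef]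
      rw [Matrix.mul_assoc, Matrix.mul_assoc, hX, hX₀, sub_self]
    have := hPkill _ hM
    rw [Matrix.mul_sub, sub_eq_zero] at this
    rw [hXtdef]; exact this
  -- P is symmetric idempotent
  have hPP : P * P = P := by
    have hfun : (fun k => χ k * χ k) = χ := by
      funext k; by_cases h : μ k = 0 <;> simp [hχdef, h]
    rw [hPdef, key, hfun]
  have hPT : Pᵀ = P := by
    have : Pᴴ = P := by
      have hχs : star χ = χ := by funext k; simp [hχdef]
      rw [hPdef]
      simp only [star_eq_conjTranspose, conjTranspose_mul, conjTranspose_conjTranspose,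
        diagonal_conjTranspose, hχs, Matrix.mul_assoc]
    rw [← conjTranspose_eq_transpose_of_trivial, this]
  refine ⟨Xt, ?_, hBXt, ?_⟩
  · -- the tendsto part
    have heq : ∀ t ∈ Set.Ioi (0:ℝ),
        (Bᵀ * B + t • (1 : Matrix (Fin m) (Fin m) ℝ))⁻¹ * Bᵀ * Q
          = U * diagonal (fun k => (μ k + t)⁻¹ * μ k) * (star U * X₀) := by
      intro t ht
      have htpos : (0:ℝ) < t := ht
      have hne : ∀ k, μ k + t ≠ 0 := fun k => ne_of_gt (by have := hμ0 k; linarith)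
      have hsum : Bᵀ * B + t • (1 : Matrix (Fin m) (Fin m) ℝ)
          = U * diagonal (fun k => μ k + t) * star U := by
        have h1 : t • (1 : Matrix (Fin m) (Fin m) ℝ) = U * diagonal (fun _ => t) * star U := by
          rw [← smul_one_eq_diagonal]
          rw [Matrix.mul_smul, Matrix.mul_one, Matrix.smul_mul, hU2]
        rw [← hAdef, hspec, h1, ← Matrix.add_mul, ← Matrix.mul_add, diagonal_add]
      have hinv : (Bᵀ * B + t • (1 : Matrix (Fin m) (Fin m) ℝ))⁻¹
          = U * diagonal (fun k => (μ k + t)⁻¹) * star U := by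
        apply inv_eq_right_inv
        rw [hsum, key]
        have : (fun k => (μ k + t) * (μ k + t)⁻¹) = fun _ => (1:ℝ) := by
          funext k; exact mul_inv_cancel₀ (hne k)
        rw [this, diagonal_one, Matrix.mul_one, hU2]
      have hBQ : Bᵀ * Q = A * X₀ := by rw [← hX₀, hAdef, Matrix.mul_assoc]
      rw [Matrix.mul_assoc, hBQ, hinv, hspec, ← Matrix.mul_assoc, key]
      simp only [Matrix.mul_assoc]
    apply Tendsto.congr' (Filter.eventuallyEq_of_mem self_mem_nhdsWithin
      (fun t ht => (heq t ht).symm))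
    have hXt' : Xt = U * diagonal χ * (star U * X₀) := by
      rw [hXtdef, hPdef]; simp only [Matrix.mul_assoc]
    rw [hXt']
    apply tendsto_pi_nhds.2
    intro i
    rw [tendsto_pi_nhds]
    intro j
    have hentry : ∀ (d : Fin m → ℝ),
        (U * diagonal d * (star U * X₀)) i j = ∑ k, U i k * d k * (star U * X₀) k j := by
      intro d
      rw [Matrix.mul_apply]
      congr 1; funext k
      rw [Matrix.mul_diagonal]
    simp only [hentry]
    apply tendsto_finset_sum
    intro k _
    by_cases h : μ k = 0
    · have : (fun t : ℝ => U i k * ((μ k + t)⁻¹ * μ k) * (star U * X₀) k j)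
          = fun _ => U i k * χ k * (star U * X₀) k j := by
        funext t; simp [h, hχdef]
      rw [this]
      exact tendsto_const_nhds
    · have hlim : Tendsto (fun t : ℝ => (μ k + t)⁻¹ * μ k) (nhds 0) (nhds (χ k)) := by
        have h1 : Tendsto (fun t : ℝ => μ k + t) (nhds 0) (nhds (μ k)) := by
          simpa using (tendsto_id (x := nhds (0:ℝ))).const_add (μ k)
        have h2 : Tendsto (fun t : ℝ => (μ k + t)⁻¹ * μ k) (nhds 0)
            (nhds ((μ k)⁻¹ * μ k)) := (h1.inv₀ h).mul tendsto_const_nhds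
        simpa [hχdef, h, inv_mul_cancel₀ h] using h2
      exact ((tendsto_const_nhds.mul (hlim.mono_left nhdsWithin_le_nhds)).mul
        tendsto_const_nhds)
  · -- minimum norm
    intro X hX
    rw [← hPX X hX]
    exact minnorm_aux P X hPT hPP
end

section
/- An information structure is deterministic (partitional) if and only if the induced hypothetical belief matrix is the identity: given a strictly positive prior p on m states and an m×n row-stochastic information structure I with all signal probabilities P(s) = Σ_θ p(θ)I(θ,s) positive, let B be the Bayes posterior matrix and Q = B·I. Then Q = Id (the n×n identity) if and only if every entry of I is 0 or 1. -/
open Matrix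

theorem stmt17 (m n : ℕ) (I : Matrix (Fin m) (Fin n) ℝ)
    (hInn : ∀ θ s, 0 ≤ I θ s) (hIrow : ∀ θ, ∑ s, I θ s = 1)
    (p : Fin m → ℝ) (hp : ∀ θ, 0 < p θ) (hpsum : ∑ θ, p θ = 1)
    (P : Fin n → ℝ) (hPdef : ∀ s, P s = ∑ θ, p θ * I θ s) (hP : ∀ s, 0 < P s)
    (B : Matrix (Fin n) (Fin m) ℝ)
    (hB : ∀ s θ, B s θ = p θ * I θ s / P s)
    (Q : Matrix (Fin n) (Fin n) ℝ) (hQ : Q = B * I) :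
    Q = 1 ↔ ∀ θ s, I θ s = 0 ∨ I θ s = 1 := by
  have hIle : ∀ θ s, I θ s ≤ 1 := by
    intro θ s
    calc I θ s ≤ ∑ s', I θ s' :=
          Finset.single_le_sum (fun s' _ => hInn θ s') (Finset.mem_univ s)
      _ = 1 := hIrow θ
  have hQexp : ∀ s s', Q s s' = (∑ θ, p θ * I θ s * I θ s') / P s := by
    intro s s'
    rw [hQ, Matrix.mul_apply, Finset.sum_div]
    refine Finset.sum_congr rfl fun θ _ => ?_
    rw [hB]; ring
  constructor
  · intro h θ s
    have hQss : Q s s = 1 := by rw [h, Matrix.one_apply_eq]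
    have hsum : ∑ θ', p θ' * I θ' s * I θ' s = P s := by
      have h2 := hQss
      rw [hQexp s s, div_eq_one_iff_eq (ne_of_gt (hP s))] at h2
      exact h2
    have hzero : ∑ θ', p θ' * I θ' s * (1 - I θ' s) = 0 := by
      have : ∑ θ', p θ' * I θ' s * (1 - I θ' s)
          = (∑ θ', p θ' * I θ' s) - ∑ θ', p θ' * I θ' s * I θ' s := by
        rw [← Finset.sum_sub_distrib]
        exact Finset.sum_congr rfl fun θ' _ => by ring
      rw [this, hsum, hPdef s, sub_self]
    have hnn : ∀ θ' ∈ Finset.univ, 0 ≤ p θ' * I θ' s * (1 - I θ' s) := by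
      intro θ' _
      exact mul_nonneg (mul_nonneg (hp θ').le (hInn θ' s)) (by linarith [hIle θ' s])
    have hterm := (Finset.sum_eq_zero_iff_of_nonneg hnn).mp hzero θ (Finset.mem_univ θ)
    rcases mul_eq_zero.mp hterm with h1 | h1
    · rcases mul_eq_zero.mp h1 with h2 | h2
      · exact absurd h2 (ne_of_gt (hp θ))
      · exact Or.inl h2
    · exact Or.inr (by linarith)
  · intro h
    ext s s'
    rw [hQexp s s']
    by_cases hss : s = s'
    · subst hss
      rw [Matrix.one_apply_eq]
      have : ∑ θ, p θ * I θ s * I θ s = P s := by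
        rw [hPdef s]
        refine Finset.sum_congr rfl fun θ _ => ?_
        rcases h θ s with h1 | h1 <;> rw [h1] <;> ring
      rw [this, div_self (ne_of_gt (hP s))]
    · rw [Matrix.one_apply_ne hss]
      have : ∑ θ, p θ * I θ s * I θ s' = 0 := by
        refine Finset.sum_eq_zero fun θ _ => ?_
        rcases h θ s with h1 | h1
        · rw [h1]; ring
        · have h2 : I θ s' = 0 := by
            by_contra h3
            rcases h θ s' with h4 | h4
            · exact h3 h4
            · have hle : I θ s + I θ s' ≤ ∑ s'', I θ s'' := by
                rw [← Finset.sum_pair hss]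
                exact Finset.sum_le_sum_of_subset_of_nonneg
                  (Finset.subset_univ _) (fun i _ _ => hInn θ i)
              rw [hIrow θ, h1, h4] at hle
              linarith
          rw [h2]; ring
      rw [this, zero_div]
end
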